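/- The set I_n defined recursively by I_1 = {s_1} and I_n = {s_1 w⁺ : w ∈ I_{n-1}} ∪ {w⁺ s_1 : w ∈ I_{n-1}}, where w⁺ denotes the result of replacing each s_j by s_{j+1} in w, is exactly the set of Coxeter elements of the symmetric group S_{n+1}, and the displayed union is disjoint. -/

import Mathlib

/-- The simple transposition `s_i = swap i (i+1)` acting on `ℤ` (we use the generators
`s_1, s_2, …`). -/
def sgen (i : ℤ) : Equiv.Perm ℤ := Equiv.swap i (i + 1)

/-- The shift operation, replacing each `s_j` by `s_{j+1}` in any word: conjugation by the
translation `x ↦ x + 1`. -/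
def shiftP (w : Equiv.Perm ℤ) : Equiv.Perm ℤ :=
  (Equiv.addRight (1 : ℤ)) * w * (Equiv.addRight (1 : ℤ))⁻¹

lemma sgen_fix {x i : ℤ} (h : x < i ∨ i + 1 < x) : sgen i x = x := by
  unfold sgen; rw [Equiv.swap_apply_of_ne_of_ne] <;> omega

lemma prod_fix {l : List ℤ} {x : ℤ} (h : ∀ i ∈ l, x < i) : (l.map sgen).prod x = x := by
  induction l with
  | nil => simp
  | cons a t ih =>
    simp only [List.map_cons, List.prod_cons, Equiv.Perm.mul_apply]
    rw [ih (fun i hi => h i (List.mem_cons_of_mem _ hi)),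
      sgen_fix (Or.inl (h a List.mem_cons_self))]

lemma shiftP_apply (w : Equiv.Perm ℤ) (x : ℤ) : shiftP w x = w (x - 1) + 1 := by
  simp [shiftP, Equiv.Perm.mul_apply, sub_eq_add_neg]

lemma shiftP_sgen (i : ℤ) : shiftP (sgen i) = sgen (i + 1) := by
  ext x
  rw [shiftP_apply]
  unfold sgen
  rw [Equiv.swap_apply_def, Equiv.swap_apply_def]
  split_ifs <;> omega

lemma shiftP_mul (a b : Equiv.Perm ℤ) : shiftP (a * b) = shiftP a * shiftP b := by
  unfold shiftP; group

lemma shiftP_prod (l : List ℤ) :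
    shiftP ((l.map sgen).prod) = ((l.map (· + 1)).map sgen).prod := by
  induction l with
  | nil => simp only [List.map_nil, List.prod_nil]; unfold shiftP; group
  | cons a t ih => simp only [List.map_cons, List.prod_cons, shiftP_mul, ih, shiftP_sgen]

lemma sgen_commute {i : ℤ} (h : 3 ≤ i) : Commute (sgen 1) (sgen i) := by
  apply Equiv.Perm.Disjoint.commute
  intro x
  by_cases hx : x = 1 ∨ x = 2
  · exact Or.inr (sgen_fix (Or.inl (by omega)))
  · exact Or.inl (sgen_fix (by omega))

lemma commute_prod {l : List ℤ} (h : ∀ i ∈ l, 3 ≤ i) :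
    Commute (sgen 1) ((l.map sgen).prod) := by
  apply Commute.list_prod_right
  intro p hp
  obtain ⟨i, hi, rfl⟩ := List.mem_map.mp hp
  exact sgen_commute (h i hi)

def TL (n : ℕ) : List ℤ := (List.range n).map (fun i : ℕ => (i : ℤ) + 1)

lemma TL_eq (n : ℕ) : (List.range n).map (fun i => (i : ℤ) + 1) = TL n := by
  unfold TL
  induction (List.range n) with
  | nil => rfl
  | cons a t ih => simpa using ih

lemma TL_succ (n : ℕ) : TL (n + 1) = 1 :: (TL n).map (· + 1) := by
  unfold TL
  rw [List.range_succ_eq_map]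
  simp only [List.map_cons, List.map_map, Nat.cast_zero, zero_add]
  congr 1

lemma mem_TL {n : ℕ} {i : ℤ} (h : i ∈ TL n) : 1 ≤ i ∧ i ≤ n := by
  obtain ⟨j, hj, rfl⟩ := List.mem_map.mp h
  have := List.mem_range.mp hj
  omega

lemma nodup_TL (n : ℕ) : (TL n).Nodup := by
  apply List.Nodup.map _ List.nodup_range
  intro a b hab
  simpa using hab

lemma map_add_sub (l : List ℤ) : (l.map (· + 1)).map (· - 1) = l := by
  rw [List.map_map]
  have h : ((· - 1) ∘ (· + 1) : ℤ → ℤ) = id := by funext x; simp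
  rw [h, List.map_id]

lemma map_sub_add (l : List ℤ) : (l.map (· - 1)).map (· + 1) = l := by
  rw [List.map_map]
  have h : ((· + 1) ∘ (· - 1) : ℤ → ℤ) = id := by funext x; simp
  rw [h, List.map_id]

lemma sgen_one_one : sgen 1 1 = 2 := by
  show Equiv.swap 1 (1 + 1) 1 = 2
  rw [Equiv.swap_apply_left]; norm_num

lemma cox_fix_nonpos {n : ℕ} {l : List ℤ} (hl : l.Perm (TL n)) {x : ℤ} (hx : x ≤ 0) :
    (l.map sgen).prod x = x :=
  prod_fix (fun i hi => by have := mem_TL (hl.mem_iff.mp hi); omega)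

lemma cox_apply_one_ne {n : ℕ} {l : List ℤ} (hl : l.Perm (TL n)) (hn : 1 ≤ n) :
    (l.map sgen).prod 1 ≠ 1 := by
  have h1l : (1 : ℤ) ∈ l := hl.mem_iff.mpr (by
    unfold TL
    exact List.mem_map.mpr ⟨0, List.mem_range.mpr (by omega), by norm_num⟩)
  obtain ⟨a, b, rfl⟩ := List.append_of_mem h1l
  have hnd : (a ++ 1 :: b).Nodup := hl.nodup_iff.mpr (nodup_TL n)
  rw [List.nodup_append] at hnd
  have h1a : (1 : ℤ) ∉ a := fun h => hnd.2.2 1 h 1 List.mem_cons_self rfl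
  have h1b : (1 : ℤ) ∉ b := (List.nodup_cons.mp hnd.2.1).1
  have hge : ∀ i ∈ a ++ 1 :: b, 1 ≤ i := fun i hi => (mem_TL (hl.mem_iff.mp hi)).1
  have ha : ∀ i ∈ a, (1 : ℤ) < i := fun i hi => by
    have := hge i (List.mem_append_left _ hi)
    rcases eq_or_ne i 1 with rfl | hne
    · exact absurd hi h1a
    · omega
  have hb : ∀ i ∈ b, (1 : ℤ) < i := fun i hi => by
    have := hge i (List.mem_append_right _ (List.mem_cons_of_mem _ hi))
    rcases eq_or_ne i 1 with rfl | hne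
    · exact absurd hi h1b
    · omega
  simp only [List.map_append, List.map_cons, List.prod_append, List.prod_cons,
    Equiv.Perm.mul_apply]
  rw [prod_fix hb, sgen_one_one]
  intro h
  have hA1 : (a.map sgen).prod 1 = 1 := prod_fix ha
  have := (Equiv.injective _) (h.trans hA1.symm)
  norm_num at this


/-- The recursively defined sets `I_1 = {s_1}`,
`I_n = {s_1 w⁺ : w ∈ I_{n-1}} ∪ {w⁺ s_1 : w ∈ I_{n-1}}`. -/
def Iset : ℕ → Set (Equiv.Perm ℤ)
  | 0 => ∅
  | 1 => {sgen 1}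
  | (n + 2) => ((fun w => sgen 1 * shiftP w) '' Iset (n + 1)) ∪
      ((fun w => shiftP w * sgen 1) '' Iset (n + 1))

/-- `I_n` is exactly the set of Coxeter elements of `S_{n+1}` (products of the simple
transpositions `s_1, …, s_n`, each appearing exactly once), and for `n ≥ 2` the union
defining `I_n` is disjoint. -/
lemma Iset_eq : ∀ n : ℕ, Iset (n + 1) =
    {w : Equiv.Perm ℤ | ∃ l : List ℤ, l.Perm (TL (n + 1)) ∧ w = (l.map sgen).prod} := by
  intro n
  induction n with
  | zero =>
    have hTL1 : TL 1 = [1] := by show List.map _ [0] = _; norm_num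
    ext w
    simp only [Iset, Set.mem_singleton_iff, Set.mem_setOf_eq, hTL1, List.perm_singleton]
    constructor
    · rintro rfl; exact ⟨[1], rfl, by simp⟩
    · rintro ⟨l, rfl, rfl⟩; simp
  | succ m ih =>
    ext w
    simp only [Iset, Set.mem_union, Set.mem_image, Set.mem_setOf_eq]
    constructor
    · rintro (⟨v, hv, rfl⟩ | ⟨v, hv, rfl⟩) <;> rw [ih] at hv <;>
        obtain ⟨l, hl, rfl⟩ := hv
      · refine ⟨1 :: l.map (· + 1), ?_, ?_⟩
        · rw [TL_succ]; exact (hl.map (· + 1)).cons 1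
        · rw [shiftP_prod]; simp
      · refine ⟨l.map (· + 1) ++ [1], ?_, ?_⟩
        · rw [TL_succ]
          exact (List.perm_append_singleton _ _).trans ((hl.map (· + 1)).cons 1)
        · rw [shiftP_prod]; simp
    · rintro ⟨l, hl, rfl⟩
      rw [TL_succ] at hl
      have h1l : (1 : ℤ) ∈ l := hl.mem_iff.mpr List.mem_cons_self
      obtain ⟨a, b, rfl⟩ := List.append_of_mem h1l
      have hab : (a ++ b).Perm ((TL (m + 1)).map (· + 1)) :=
        (List.perm_middle.symm.trans hl).cons_inv
      have hmemab : ∀ i ∈ a ++ b, 2 ≤ i := by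
        intro i hi
        obtain ⟨j, hj, rfl⟩ := List.mem_map.mp (hab.mem_iff.mp hi)
        have := mem_TL hj; omega
      have hndab : (a ++ b).Nodup := hab.nodup_iff.mpr
        (List.Nodup.map (fun x y h => by omega) (nodup_TL _))
      rw [List.nodup_append] at hndab
      have hw : ((a ++ 1 :: b).map sgen).prod
          = (a.map sgen).prod * sgen 1 * (b.map sgen).prod := by
        simp [List.map_append, List.prod_append, mul_assoc]
      have hm'perm : ((a ++ b).map (· - 1)).Perm (TL (m + 1)) := by
        have := hab.map (· - 1)
        rwa [map_add_sub] at this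
      have hm'eq : shiftP ((((a ++ b).map (· - 1)).map sgen).prod)
          = ((a ++ b).map sgen).prod := by
        rw [shiftP_prod, map_sub_add]
      by_cases h2a : (2 : ℤ) ∈ a
      · -- 2 ∈ a, so 2 ∉ b, entries of b are ≥ 3
        have h2b : (2 : ℤ) ∉ b := fun hb => hndab.2.2 2 h2a 2 hb rfl
        have hb3 : ∀ i ∈ b, (3 : ℤ) ≤ i := by
          intro i hi
          have := hmemab i (List.mem_append_right a hi)
          rcases eq_or_ne i 2 with rfl | hne
          · exact absurd hi h2b
          · omega
        right
        refine ⟨(((a ++ b).map (· - 1)).map sgen).prod, ?_, ?_⟩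
        · rw [ih]; exact ⟨_, hm'perm, rfl⟩
        · rw [hm'eq, hw, List.map_append, List.prod_append,
            mul_assoc, ← (commute_prod hb3).eq, ← mul_assoc]
      · -- 2 ∉ a, entries of a are ≥ 3
        have ha3 : ∀ i ∈ a, (3 : ℤ) ≤ i := by
          intro i hi
          have := hmemab i (List.mem_append_left b hi)
          rcases eq_or_ne i 2 with rfl | hne
          · exact absurd hi h2a
          · omega
        left
        refine ⟨(((a ++ b).map (· - 1)).map sgen).prod, ?_, ?_⟩
        · rw [ih]; exact ⟨_, hm'perm, rfl⟩
        · rw [hm'eq, hw, List.map_append, List.prod_append,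
            ← mul_assoc, (commute_prod ha3).eq]


theorem Iset_eq_coxeter_elements (n : ℕ) (hn : 1 ≤ n) :
    (Iset n = {w : Equiv.Perm ℤ | ∃ l : List ℤ,
        l.Perm ((List.range n).map (fun i => (i : ℤ) + 1)) ∧
        w = (l.map sgen).prod}) ∧
    (2 ≤ n → Disjoint ((fun w => sgen 1 * shiftP w) '' Iset (n - 1))
        ((fun w => shiftP w * sgen 1) '' Iset (n - 1))) := by
  obtain ⟨m, rfl⟩ : ∃ m, n = m + 1 := ⟨n - 1, by omega⟩
  constructor
  · rw [Iset_eq m]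
    simp only [TL_eq]
  · intro h2
    obtain ⟨k, rfl⟩ : ∃ k, m = k + 1 := ⟨m - 1, by omega⟩
    rw [Set.disjoint_left]
    rintro x ⟨v, hv, rfl⟩ ⟨v', hv', hx⟩
    simp only [Nat.add_sub_cancel] at hv hv' hx
    rw [Iset_eq k] at hv hv'
    obtain ⟨l, hl, rfl⟩ := hv
    obtain ⟨l', hl', rfl⟩ := hv'
    have h1 := congrArg (fun f : Equiv.Perm ℤ => f 1) hx
    simp only [Equiv.Perm.mul_apply] at h1
    rw [sgen_one_one, shiftP_apply, shiftP_apply] at h1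
    norm_num at h1
    rw [cox_fix_nonpos hl (by norm_num)] at h1
    norm_num [sgen_one_one] at h1
    have : (l'.map sgen).prod 1 = 1 := by omega
    exact cox_apply_one_ne hl' (by omega) this
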